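/- For the n-qubit W state, ⟨W_n| X ⊗ X ⊗ Z^{⊗(o-2)} ⊗ I^{⊗(n-o)} |W_n⟩ = 2/n for 2 ≤ o ≤ n, where X = |0⟩⟨1| + |1⟩⟨0| and Z = |0⟩⟨0| - |1⟩⟨1|. -/

import Mathlib

open Matrix

noncomputable def Wvec (n : ℕ) : (Fin n → Fin 2) → ℂ := fun x =>
  if (Finset.univ.filter fun i => x i = 1).card = 1 then ((Real.sqrt n)⁻¹ : ℝ) else 0

def outer {ι : Type*} (v : ι → ℂ) : Matrix ι ι ℂ :=
  Matrix.of fun x y => v x * star (v y)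

def vac (n : ℕ) : (Fin n → Fin 2) → ℂ := fun x =>
  if x = (fun _ => 0) then 1 else 0

def tensOp {m d : ℕ} (M : Fin m → Matrix (Fin d) (Fin d) ℂ) :
    Matrix (Fin m → Fin d) (Fin m → Fin d) ℂ :=
  Matrix.of fun x y => ∏ l, M l (x l) (y l)

/-- Pauli `Z`. -/
def Zp : Matrix (Fin 2) (Fin 2) ℂ := !![1, 0; 0, -1]

/-- Pauli `X`. -/
def Xp : Matrix (Fin 2) (Fin 2) ℂ := !![0, 1; 1, 0]

/-- The three measurement choices: `M_0 = I`, `M_1 = Z`, `M_2 = X`. -/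
def Mset : Fin 3 → Matrix (Fin 2) (Fin 2) ℂ := ![1, Zp, Xp]

namespace St15
def e (n : ℕ) (i : Fin n) : Fin n → Fin 2 := fun l => if l = i then 1 else 0

lemma fin2_cases : ∀ a : Fin 2, a ≠ 1 → a = 0 := by decide

lemma e_inj (n : ℕ) : Function.Injective (e n) := by
  intro i j h
  have h2 := congrFun h i
  simp only [e, if_pos rfl] at h2
  by_contra hij
  rw [if_neg hij] at h2
  exact absurd h2 (by decide)

lemma card_eq_one_iff (n : ℕ) (x : Fin n → Fin 2) :
    (Finset.univ.filter fun i => x i = 1).card = 1 ↔ ∃ i, x = e n i := by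
  constructor
  · intro h
    obtain ⟨i, hi⟩ := Finset.card_eq_one.mp h
    have hmem : ∀ m, x m = 1 ↔ m = i := by
      intro m
      constructor
      · intro hm
        have : m ∈ Finset.univ.filter fun i => x i = 1 := by simp [hm]
        rw [hi] at this; simpa using this
      · intro hmi
        have hh : i ∈ Finset.univ.filter fun k => x k = 1 := by
          rw [hi]; exact Finset.mem_singleton_self i
        rw [hmi]
        simpa using hh
    refine ⟨i, funext fun l => ?_⟩
    by_cases hl : l = i
    · simp only [e, if_pos hl, hl]
      exact (hmem i).mpr rfl
    · have hx : x l ≠ 1 := fun hc => hl ((hmem l).mp hc)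
      simp [e, hl, fin2_cases _ hx]
  · rintro ⟨i, rfl⟩
    rw [Finset.card_eq_one]
    refine ⟨i, ?_⟩
    ext m
    simp only [Finset.mem_filter, Finset.mem_univ, true_and, Finset.mem_singleton, e]
    constructor
    · intro h; by_contra hmi; simp [hmi] at h
    · rintro rfl; simp

lemma star_W (n : ℕ) : star (Wvec n) = Wvec n := by
  funext x
  simp [Wvec, apply_ite (star : ℂ → ℂ), Complex.star_def, Complex.conj_ofReal]

lemma sum_W (n : ℕ) (f : (Fin n → Fin 2) → ℂ) :
    ∑ x, Wvec n x * f x = (((Real.sqrt n)⁻¹ : ℝ) : ℂ) * ∑ i, f (e n i) := by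
  have h1 : ∑ x, Wvec n x * f x = ∑ x ∈ Finset.univ.image (e n), Wvec n x * f x := by
    refine (Finset.sum_subset (Finset.subset_univ _) ?_).symm
    intro x _ hx
    have hne : ¬ ∃ i, x = e n i := by
      rintro ⟨i, hi⟩
      exact hx (Finset.mem_image.mpr ⟨i, Finset.mem_univ i, hi.symm⟩)
    have hc : ¬ (Finset.univ.filter fun i => x i = 1).card = 1 :=
      fun h => hne ((card_eq_one_iff n x).mp h)
    simp [Wvec, hc]
  rw [h1, Finset.sum_image (fun i _ j _ h => e_inj n h), Finset.mul_sum]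
  refine Finset.sum_congr rfl fun i _ => ?_
  rw [Wvec]
  rw [if_pos ((card_eq_one_iff n _).mpr ⟨i, rfl⟩)]

end St15


open St15

/-- `⟨W_n| X ⊗ X ⊗ Z^{⊗(o-2)} ⊗ I^{⊗(n-o)} |W_n⟩ = 2/n` for `2 ≤ o ≤ n`. -/
theorem stmt15 (n o : ℕ) (ho2 : 2 ≤ o) (hon : o ≤ n) :
    star (Wvec n) ⬝ᵥ
        (tensOp fun l : Fin n =>
          if (l : ℕ) < 2 then Xp else if (l : ℕ) < o then Zp else 1).mulVec (Wvec n)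
      = (((2 : ℝ) / (n : ℝ) : ℝ) : ℂ) := by
  have hn2 : 2 ≤ n := ho2.trans hon
  set M' : Fin n → Matrix (Fin 2) (Fin 2) ℂ :=
    fun l : Fin n => if (l : ℕ) < 2 then Xp else if (l : ℕ) < o then Zp else 1 with hM'
  set z : Fin n := ⟨0, by omega⟩ with hz
  set w : Fin n := ⟨1, by omega⟩ with hw
  have hzw : z ≠ w := by simp [hz, hw, Fin.ext_iff]
  have hzv : (z : ℕ) = 0 := rfl
  have hwv : (w : ℕ) = 1 := rfl
  have hXdiag : ∀ a : Fin 2, Xp a a = 0 := by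
    intro a; fin_cases a <;> simp [Xp]
  -- good cases
  have hgood : ∀ i j : Fin n, ((i = z ∧ j = w) ∨ (i = w ∧ j = z)) →
      tensOp M' (e n i) (e n j) = 1 := by
    rintro i j (⟨rfl, rfl⟩ | ⟨rfl, rfl⟩) <;>
    · show ∏ l, M' l (e n _ l) (e n _ l) = 1
      refine Finset.prod_eq_one fun l _ => ?_
      by_cases h0 : l = z
      · subst h0
        have h2 : ((z : Fin n) : ℕ) < 2 := by rw [hzv]; omega
        simp [hM', h2, show ((z : Fin n) : ℕ) ≤ 1 by omega, e, hzw, hzw.symm, Xp]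
      · by_cases h1 : l = w
        · subst h1
          have h2 : ((w : Fin n) : ℕ) < 2 := by rw [hwv]; omega
          simp [hM', h2, show ((w : Fin n) : ℕ) ≤ 1 by omega, e, hzw, hzw.symm, Xp]
        · have hl0 : (l : ℕ) ≠ 0 := by
            intro hc; exact h0 (by simp [hz, Fin.ext_iff, hc])
          have hl1 : (l : ℕ) ≠ 1 := by
            intro hc; exact h1 (by simp [hw, Fin.ext_iff, hc])
          have h2 : ¬ (l : ℕ) < 2 := by omega
          have hez : e n z l = 0 := by simp [e, h0]
          have hew : e n w l = 0 := by simp [e, h1]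
          by_cases ho : (l : ℕ) < o <;>
            simp [hM', h2, show ¬ (l : ℕ) ≤ 1 by omega, ho, hez, hew, Zp, Matrix.one_apply]
  -- bad cases
  have hbad : ∀ i j : Fin n, ¬(i = z ∧ j = w) → ¬(i = w ∧ j = z) →
      tensOp M' (e n i) (e n j) = 0 := by
    intro i j h1 h2
    show ∏ l, M' l (e n i l) (e n j l) = 0
    by_cases h0 : e n i z = e n j z
    · refine Finset.prod_eq_zero (Finset.mem_univ z) ?_
      rw [h0]
      have hz2 : (z : ℕ) < 2 := by rw [hzv]; omega
      simp [hM', hz2, show (z : ℕ) ≤ 1 by omega, hXdiag]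
    · by_cases hh1 : e n i w = e n j w
      · refine Finset.prod_eq_zero (Finset.mem_univ w) ?_
        rw [hh1]
        have hw2 : (w : ℕ) < 2 := by rw [hwv]; omega
        simp [hM', hw2, show (w : ℕ) ≤ 1 by omega, hXdiag]
      · exfalso
        by_cases hiz : z = i <;> by_cases hjz : z = j <;>
          by_cases hiw : w = i <;> by_cases hjw : w = j <;>
          simp_all [e]
  have hA : ∀ i j : Fin n, tensOp M' (e n i) (e n j) =
      (if i = z ∧ j = w then (1:ℂ) else 0) + (if i = w ∧ j = z then (1:ℂ) else 0) := by
    intro i j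
    by_cases h1 : i = z ∧ j = w
    · obtain ⟨rfl, rfl⟩ := h1
      rw [hgood _ _ (Or.inl ⟨rfl, rfl⟩)]
      simp [hzw, hzw.symm]
    · by_cases h2 : i = w ∧ j = z
      · rw [hgood i j (Or.inr h2), if_neg h1, if_pos h2]; ring
      · rw [hbad i j h1 h2, if_neg h1, if_neg h2]; ring
  -- main computation
  set c : ℂ := (((Real.sqrt n)⁻¹ : ℝ) : ℂ) with hc
  have key : star (Wvec n) ⬝ᵥ (tensOp M').mulVec (Wvec n) = c * (c * 2) := by
    rw [star_W]
    have : Wvec n ⬝ᵥ (tensOp M').mulVec (Wvec n)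
        = ∑ x, Wvec n x * ∑ y, tensOp M' x y * Wvec n y := rfl
    rw [this, sum_W]
    congr 1
    have hinner : ∀ i : Fin n,
        (∑ y, tensOp M' (e n i) y * Wvec n y) = c * ∑ j, tensOp M' (e n i) (e n j) := by
      intro i
      rw [show (∑ y, tensOp M' (e n i) y * Wvec n y)
          = ∑ y, Wvec n y * tensOp M' (e n i) y from
        Finset.sum_congr rfl fun y _ => mul_comm _ _, sum_W]
    calc (∑ i, ∑ y, tensOp M' (e n i) y * Wvec n y)
        = ∑ i, c * ∑ j, tensOp M' (e n i) (e n j) := by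
          exact Finset.sum_congr rfl fun i _ => hinner i
      _ = c * ∑ i, ∑ j, tensOp M' (e n i) (e n j) := by rw [Finset.mul_sum]
      _ = c * 2 := by
          congr 1
          have : ∀ i : Fin n, (∑ j, tensOp M' (e n i) (e n j))
              = (if i = z then (1:ℂ) else 0) + (if i = w then (1:ℂ) else 0) := by
            intro i
            simp [hA, Finset.sum_add_distrib, ite_and]
          simp [this, Finset.sum_add_distrib]
          norm_num
  rw [key, hc]
  have hreal : (Real.sqrt n)⁻¹ * ((Real.sqrt n)⁻¹ * 2) = 2 / (n : ℝ) := by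
    rw [← mul_assoc, ← mul_inv, Real.mul_self_sqrt (by positivity)]
    ring
  calc c * (c * 2) = (((Real.sqrt n)⁻¹ * ((Real.sqrt n)⁻¹ * 2) : ℝ) : ℂ) := by
        push_cast [hc]; ring
    _ = (((2:ℝ) / (n:ℝ) : ℝ) : ℂ) := by rw [hreal]
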